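/- Let 0 < ε ≤ 1/2, let k be a positive integer, let X ⊆ ℝ^d be a finite set with |X| ≥ k, and let 1 ≤ i ≤ k. Suppose that for every j with i < j ≤ k, Δ_{j−1}(X) < (1 + ε/((4+ε/2)·k))·Δ_j(X) (i.e., X is not (j, ε/((4+ε/2)k))-irreducible for any such j). Then Δ_i(X) ≤ (1 + ε/4)·Δ_k(X). -/

import Mathlib

open Finset
open scoped BigOperators
open Classical

noncomputable section

/-- Points of `ℝ^d`. -/
abbrev Pt (d : ℕ) := EuclideanSpace ℝ (Fin d)

/-- `Φ(C, X) = Σ_{x ∈ X} min_{c ∈ C} ‖x - c‖²`. -/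
noncomputable def Phi {d : ℕ} (C X : Finset (Pt d)) : ℝ :=
  ∑ x ∈ X, sInf ((fun c => ‖x - c‖ ^ 2) '' (C : Set (Pt d)))

/-- The centroid `μ(X)` of a finite set of points. -/
noncomputable def ctr {d : ℕ} (X : Finset (Pt d)) : Pt d :=
  (X.card : ℝ)⁻¹ • ∑ x ∈ X, x

/-- `Δ₁(X) = Φ({μ(X)}, X)`. -/
noncomputable def Delta1 {d : ℕ} (X : Finset (Pt d)) : ℝ := Phi {ctr X} X

/-- `Δ_k(X)`: the optimal `k`-means cost of `X`. -/
noncomputable def DeltaK {d : ℕ} (k : ℕ) (X : Finset (Pt d)) : ℝ :=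
  sInf ((fun C => Phi C X) '' {C : Finset (Pt d) | C.card = k})

/-- `X₁, …, X_k` is an optimal `k`-means partition of `X`. -/
def IsOptPartition {d : ℕ} (k : ℕ) (X : Finset (Pt d)) (Xs : Fin k → Finset (Pt d)) : Prop :=
  (∀ j, (Xs j).Nonempty) ∧
  (∀ j l, j ≠ l → Disjoint (Xs j) (Xs l)) ∧
  Finset.univ.biUnion Xs = X ∧
  ∑ j, Delta1 (Xs j) = DeltaK k X

/-- `X` is `(k, ε)`-irreducible: `Δ_{k-1}(X) ≥ (1+ε)·Δ_k(X)`. -/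
def KIrreducible {d : ℕ} (k : ℕ) (ε : ℝ) (X : Finset (Pt d)) : Prop :=
  (1 + ε) * DeltaK k X ≤ DeltaK (k - 1) X

/-- The invariant `P(i)`: `Ci` consists of the centers `c r` for `r < i` (clusters reindexed
so that the covered clusters come first), each `c r` is a `(1 + ε/16)`-good center for the
optimal cluster `Xs r`, and `Φ(Ci, X) > 0`. -/
def InvariantP {d k : ℕ} (ε : ℝ) (X : Finset (Pt d)) (Xs : Fin k → Finset (Pt d))
    (i : ℕ) (c : Fin k → Pt d) (Ci : Finset (Pt d)) : Prop :=
  Ci = Finset.image c (Finset.univ.filter (fun r : Fin k => r.val < i)) ∧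
  (∀ r : Fin k, r.val < i → Phi {c r} (Xs r) ≤ (1 + ε / 16) * Delta1 (Xs r)) ∧
  0 < Phi Ci X

lemma Phi_nonneg {d : ℕ} (C X : Finset (Pt d)) : 0 ≤ Phi C X := by
  refine Finset.sum_nonneg fun x _ => Real.sInf_nonneg ?_
  rintro y ⟨c, _, rfl⟩
  positivity

lemma DeltaK_nonneg {d : ℕ} (k : ℕ) (X : Finset (Pt d)) : 0 ≤ DeltaK k X := by
  refine Real.sInf_nonneg ?_
  rintro y ⟨C, _, rfl⟩
  exact Phi_nonneg C X

/-- Let `0 < ε ≤ 1/2`, `k ≥ 1`, `|X| ≥ k` and `1 ≤ i ≤ k`. If for every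
`j` with `i < j ≤ k` the set `X` is not `(j, ε/((4+ε/2)k))`-irreducible, i.e.
`Δ_{j−1}(X) < (1 + ε/((4+ε/2)·k))·Δ_j(X)`, then `Δ_i(X) ≤ (1 + ε/4)·Δ_k(X)`. -/
theorem stmt_16 {d k : ℕ} (hk : 0 < k) (ε : ℝ) (hε0 : 0 < ε) (hε : ε ≤ 1 / 2)
    (X : Finset (Pt d)) (hcard : k ≤ X.card) (i : ℕ) (hi : 1 ≤ i) (hik : i ≤ k)
    (h : ∀ j : ℕ, i < j → j ≤ k →
      DeltaK (j - 1) X < (1 + ε / ((4 + ε / 2) * k)) * DeltaK j X) :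
    DeltaK i X ≤ (1 + ε / 4) * DeltaK k X := by
  set δ : ℝ := ε / ((4 + ε / 2) * k) with hδdef
  have hk0 : (0:ℝ) < (k:ℝ) := by exact_mod_cast hk
  have hδ0 : 0 ≤ δ := by positivity
  -- Step 1: chain
  have chain : ∀ m : ℕ, i + m ≤ k → DeltaK i X ≤ (1 + δ) ^ m * DeltaK (i + m) X := by
    intro m
    induction m with
    | zero => intro _; simp
    | succ n ih =>
      intro hmk
      have h1 : DeltaK i X ≤ (1 + δ) ^ n * DeltaK (i + n) X := ih (by omega)
      have h2 : DeltaK (i + n) X < (1 + δ) * DeltaK (i + n + 1) X := by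
        have := h (i + n + 1) (by omega) (by omega)
        simpa using this
      calc DeltaK i X ≤ (1 + δ) ^ n * DeltaK (i + n) X := h1
        _ ≤ (1 + δ) ^ n * ((1 + δ) * DeltaK (i + n + 1) X) := by
            apply mul_le_mul_of_nonneg_left h2.le (by positivity)
        _ = (1 + δ) ^ (n + 1) * DeltaK (i + (n + 1)) X := by
            rw [show i + n + 1 = i + (n+1) by omega]; ring
  have hchain : DeltaK i X ≤ (1 + δ) ^ (k - i) * DeltaK k X := by
    have := chain (k - i) (by omega)
    rwa [show i + (k - i) = k by omega] at this
  -- Step 2: (1+δ)^(k-i) ≤ (1+δ)^k ≤ exp(kδ) ≤ 1 + ε/4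
  have hkδ : (k:ℝ) * δ = ε / (4 + ε / 2) := by
    rw [hδdef, mul_div_assoc', mul_comm (4 + ε / 2) (k:ℝ), mul_div_mul_left _ _ hk0.ne']
  have hs0 : 0 ≤ ε / (4 + ε / 2) := by positivity
  have hs1 : ε / (4 + ε / 2) ≤ 1 := by
    rw [div_le_one (by linarith)]; linarith
  have key : ∀ s : ℝ, 0 ≤ s → s ≤ 1 → s * (4 + ε / 2) = ε →
      1 + s + s ^ 2 / 2 + s ^ 3 / 6 + s ^ 4 * 5 / 96 ≤ 1 + ε / 4 := by
    intro s hsnn hsle1 hseq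
    have hε4s : 4 * s ≤ ε := by nlinarith [mul_nonneg hsnn hε0.le]
    have h43 : s ^ 4 ≤ s ^ 3 := by nlinarith [pow_nonneg hsnn 3]
    have e1 : 4 * s + s * ε / 2 = ε := by linear_combination hseq
    have f1 : s * ε = 4 * s ^ 2 + s ^ 2 * ε / 2 := by linear_combination (-s) * e1
    have f2 : 4 * s ^ 3 ≤ s ^ 2 * ε := by
      have := mul_le_mul_of_nonneg_left hε4s (sq_nonneg s)
      linarith [this]
    linarith [f1, f2, h43, e1, pow_nonneg hsnn 3]
  have hexp : Real.exp (ε / (4 + ε / 2)) ≤ 1 + ε / 4 := by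
    have hb := Real.exp_bound' hs0 hs1 (n := 4) (by norm_num)
    have hsum : (∑ m ∈ Finset.range 4, (ε / (4 + ε / 2)) ^ m / m.factorial) +
        (ε / (4 + ε / 2)) ^ 4 * ((4:ℕ) + 1) / ((4:ℕ).factorial * 4) =
        1 + (ε / (4 + ε / 2)) + (ε / (4 + ε / 2)) ^ 2 / 2 + (ε / (4 + ε / 2)) ^ 3 / 6 +
          (ε / (4 + ε / 2)) ^ 4 * 5 / 96 := by
      simp [Finset.sum_range_succ, Nat.factorial]
      ring
    have hkey := key (ε / (4 + ε / 2)) hs0 hs1 (by field_simp)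
    calc Real.exp (ε / (4 + ε / 2)) ≤ _ := hb
      _ = _ := hsum
      _ ≤ 1 + ε / 4 := hkey
  have hpow : (1 + δ) ^ (k - i) ≤ 1 + ε / 4 := by
    calc (1 + δ) ^ (k - i) ≤ (1 + δ) ^ k := by
          apply pow_le_pow_right₀ (by linarith) (by omega)
      _ ≤ Real.exp δ ^ k := by
          apply pow_le_pow_left₀ (by linarith) (by linarith [Real.add_one_le_exp δ])
      _ = Real.exp ((k:ℝ) * δ) := by rw [← Real.exp_nat_mul]
      _ ≤ 1 + ε / 4 := by rw [hkδ]; exact hexp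
  calc DeltaK i X ≤ (1 + δ) ^ (k - i) * DeltaK k X := hchain
    _ ≤ (1 + ε / 4) * DeltaK k X :=
        mul_le_mul_of_nonneg_right hpow (DeltaK_nonneg k X)
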